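/- Let n = 1, a₁ = -1, a₃ = 1 and 0 < a₂ < 32/(15√6) (case DFF, small a₂). Suppose φ ∈ H¹(ℝ)\{0} satisfies K(φ) = 0 and P(φ) = 0 (with K and P as for the triple power equation in 1D). Then ∂²_λ S(φ^λ)|_{λ=1} = -(4/81)‖φ‖³_{L³} - (1/54)‖φ‖⁵_{L⁵} + (5a₂/72)‖φ‖⁴_{L⁴} < 0. -/

import Mathlib

open MeasureTheory

noncomputable def gradSq1 (v : ℝ → ℝ) : ℝ := ∫ x, (deriv v x)^2

noncomputable def lp1 (p : ℕ) (v : ℝ → ℝ) : ℝ := ∫ x, |v x| ^ p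

noncomputable def Kf1 (a₂ : ℝ) (v : ℝ → ℝ) : ℝ :=
  gradSq1 v + lp1 3 v - a₂ * lp1 4 v - lp1 5 v

noncomputable def Sf1 (a₂ : ℝ) (v : ℝ → ℝ) : ℝ :=
  (1/2) * gradSq1 v + (1/3) * lp1 3 v - (a₂/4) * lp1 4 v - (1/5) * lp1 5 v

noncomputable def Pf1 (a₂ : ℝ) (v : ℝ → ℝ) : ℝ :=
  gradSq1 v + (1/6) * lp1 3 v - (a₂/4) * lp1 4 v - (3/10) * lp1 5 v

/-- The rescaling `v^λ(x) = λ^{1/2} v (λ x)` in dimension one. -/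
noncomputable def scal1 (l : ℝ) (v : ℝ → ℝ) : ℝ → ℝ :=
  fun x => l ^ ((1:ℝ)/2) * v (l * x)

/-- `φ ∈ H¹(ℝ)` together with the integrabilities making the functionals
well defined. -/
def Adm1 (v : ℝ → ℝ) : Prop :=
  Differentiable ℝ v ∧ MemLp v 2 volume ∧ MemLp (deriv v) 2 volume ∧
    MemLp v 3 volume ∧ MemLp v 4 volume ∧ MemLp v 5 volume

lemma lp1_scal (φ : ℝ → ℝ) (p : ℕ) {l : ℝ} (hl : 0 < l) :
    lp1 p (scal1 l φ) = l ^ ((p:ℝ)/2 - 1) * lp1 p φ := by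
  have hc : (0:ℝ) < l ^ ((1:ℝ)/2) := Real.rpow_pos_of_pos hl _
  have h1 : ∀ x, |l ^ ((1:ℝ)/2) * φ (l*x)| ^ p = l ^ ((p:ℝ)/2) * |φ (l*x)| ^ p := by
    intro x
    rw [abs_mul, abs_of_pos hc, mul_pow, ← Real.rpow_natCast (l ^ ((1:ℝ)/2)) p,
      ← Real.rpow_mul hl.le, show (1:ℝ)/2 * (p:ℝ) = (p:ℝ)/2 by ring]
  unfold lp1 scal1
  simp_rw [h1]
  rw [integral_const_mul _ _, Measure.integral_comp_mul_left (fun y => |φ y| ^ p) l, smul_eq_mul,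
    abs_of_pos (inv_pos.mpr hl), ← mul_assoc, ← Real.rpow_neg_one l,
    ← Real.rpow_add hl, show (p:ℝ)/2 + (-1) = (p:ℝ)/2 - 1 by ring]

lemma gradSq1_scal (φ : ℝ → ℝ) (hφ : Differentiable ℝ φ) {l : ℝ} (hl : 0 < l) :
    gradSq1 (scal1 l φ) = l ^ 2 * gradSq1 φ := by
  have hd : ∀ x, deriv (scal1 l φ) x = l ^ ((1:ℝ)/2) * (deriv φ (l*x) * l) := by
    intro x
    have h1 : HasDerivAt (fun y : ℝ => l * y) l x := by
      simpa using (hasDerivAt_id x).const_mul l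
    have h2 : HasDerivAt (fun y : ℝ => φ (l * y)) (deriv φ (l*x) * l) x :=
      ((hφ (l*x)).hasDerivAt).comp x h1
    exact (h2.const_mul _).deriv
  have hsq : (l ^ ((1:ℝ)/2))^2 = l := by
    rw [← Real.rpow_natCast (l ^ ((1:ℝ)/2)) 2, ← Real.rpow_mul hl.le]
    norm_num
  have h3 : ∀ x, (l ^ ((1:ℝ)/2) * (deriv φ (l*x) * l))^2
      = (l^3) * (deriv φ (l*x))^2 := by
    intro x
    rw [mul_pow, mul_pow, hsq]; ring
  unfold gradSq1
  simp_rw [hd, h3]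
  rw [integral_const_mul _ _, Measure.integral_comp_mul_left (fun y => (deriv φ y)^2) l,
    smul_eq_mul, abs_of_pos (inv_pos.mpr hl), ← mul_assoc]
  congr 1
  field_simp

lemma integrable_abs_pow (v : ℝ → ℝ) (p : ℕ) (hp : p ≠ 0) (hv : MemLp v p volume) :
    Integrable (fun x => |v x| ^ p) := by
  have h := hv.integrable_norm_rpow (by exact_mod_cast (Nat.cast_ne_zero (R := ENNReal)).mpr hp)
    (by simp)
  have he : ∀ x : ℝ, ‖v x‖ ^ (ENNReal.toReal p) = |v x| ^ p := by
    intro x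
    rw [Real.norm_eq_abs, ENNReal.toReal_natCast, Real.rpow_natCast]
  simpa [he] using h

theorem stmt13 (a₂ : ℝ) (ha₂ : 0 < a₂) (ha₂' : a₂ < 32 / (15 * Real.sqrt 6))
    (φ : ℝ → ℝ) (hφ : Adm1 φ) (hφ0 : φ ≠ 0)
    (hK : Kf1 a₂ φ = 0) (hP : Pf1 a₂ φ = 0) :
    deriv (deriv (fun l : ℝ => Sf1 a₂ (scal1 l φ))) 1
        = -(4/81) * lp1 3 φ - (1/54) * lp1 5 φ + (5*a₂/72) * lp1 4 φ ∧
      -(4/81) * lp1 3 φ - (1/54) * lp1 5 φ + (5*a₂/72) * lp1 4 φ < 0 := by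
  obtain ⟨hdiff, h2, hd2, h3, h4, h5⟩ := hφ
  set G := gradSq1 φ with hG
  set A3 := lp1 3 φ with hA3
  set B4 := lp1 4 φ with hB4
  set C5 := lp1 5 φ with hC5
  -- the explicit scaled functional and its derivatives
  set g : ℝ → ℝ := fun l => (1/2)*(l^2 * G) + (1/3)*(l ^ ((1:ℝ)/2) * A3)
      - (a₂/4)*(l * B4) - (1/5)*(l ^ ((3:ℝ)/2) * C5) with hg
  set g' : ℝ → ℝ := fun l => l * G + (1/6)*(l ^ (-(1:ℝ)/2) * A3)
      - (a₂/4)*B4 - (3/10)*(l ^ ((1:ℝ)/2) * C5) with hg'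
  have hform : ∀ l ∈ Set.Ioi (0:ℝ), Sf1 a₂ (scal1 l φ) = g l := by
    intro l hl
    have hl : (0:ℝ) < l := hl
    rw [Sf1, gradSq1_scal φ hdiff hl, lp1_scal φ 3 hl, lp1_scal φ 4 hl, lp1_scal φ 5 hl,
      show ((3:ℕ):ℝ)/2 - 1 = (1:ℝ)/2 by norm_num,
      show ((4:ℕ):ℝ)/2 - 1 = (1:ℝ) by norm_num,
      show ((5:ℕ):ℝ)/2 - 1 = (3:ℝ)/2 by norm_num, Real.rpow_one]
  have hgderiv : ∀ l ∈ Set.Ioi (0:ℝ), HasDerivAt g (g' l) l := by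
    intro l hl
    have hl : (0:ℝ) < l := hl
    have h12 : HasDerivAt (fun l : ℝ => l ^ ((1:ℝ)/2)) ((1/2) * l ^ (-(1:ℝ)/2)) l := by
      have := Real.hasDerivAt_rpow_const (x := l) (p := (1:ℝ)/2) (Or.inl hl.ne')
      convert this using 2; norm_num
    have h32 : HasDerivAt (fun l : ℝ => l ^ ((3:ℝ)/2)) ((3/2) * l ^ ((1:ℝ)/2)) l := by
      have := Real.hasDerivAt_rpow_const (x := l) (p := (3:ℝ)/2) (Or.inl hl.ne')
      convert this using 2; norm_num
    have hsq : HasDerivAt (fun l : ℝ => l^2) (2*l) l := by simpa using hasDerivAt_pow 2 l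
    have hid : HasDerivAt (fun l : ℝ => l) 1 l := hasDerivAt_id l
    have h := ((((hsq.mul_const G).const_mul ((1:ℝ)/2)).add
        ((h12.mul_const A3).const_mul ((1:ℝ)/3))).sub
        ((hid.mul_const B4).const_mul (a₂/4))).sub
        ((h32.mul_const C5).const_mul ((1:ℝ)/5))
    refine h.congr_deriv ?_
    simp only [hg']
    ring
  have hg'deriv : HasDerivAt g' (G - (1/12)*A3 - (3/20)*C5) 1 := by
    have hm12 : HasDerivAt (fun l : ℝ => l ^ (-(1:ℝ)/2)) (-(1/2) * (1:ℝ)) 1 := by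
      have := Real.hasDerivAt_rpow_const (x := (1:ℝ)) (p := -(1:ℝ)/2) (Or.inl one_ne_zero)
      convert this using 2 <;> norm_num [Real.one_rpow]
    have h12 : HasDerivAt (fun l : ℝ => l ^ ((1:ℝ)/2)) ((1/2) * (1:ℝ)) 1 := by
      have := Real.hasDerivAt_rpow_const (x := (1:ℝ)) (p := (1:ℝ)/2) (Or.inl one_ne_zero)
      convert this using 2 <;> norm_num [Real.one_rpow]
    have hid : HasDerivAt (fun l : ℝ => l) 1 (1:ℝ) := hasDerivAt_id 1
    have h := (((hid.mul_const G).add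
        ((hm12.mul_const A3).const_mul ((1:ℝ)/6))).sub
        (hasDerivAt_const (1:ℝ) ((a₂/4)*B4))).sub
        ((h12.mul_const C5).const_mul ((3:ℝ)/10))
    refine h.congr_deriv ?_
    ring
  have hmem : Set.Ioi (0:ℝ) ∈ nhds (1:ℝ) := Ioi_mem_nhds one_pos
  have hEq1 : (fun l : ℝ => Sf1 a₂ (scal1 l φ)) =ᶠ[nhds (1:ℝ)] g :=
    Filter.eventuallyEq_of_mem hmem hform
  have hEq2 : deriv g =ᶠ[nhds (1:ℝ)] g' :=
    Filter.eventuallyEq_of_mem hmem (fun l hl => (hgderiv l hl).deriv)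
  have hderiv_eq : deriv (deriv (fun l : ℝ => Sf1 a₂ (scal1 l φ))) 1 = deriv g' 1 :=
    (hEq1.deriv.trans hEq2).deriv_eq
  have hval : deriv (deriv (fun l : ℝ => Sf1 a₂ (scal1 l φ))) 1
      = G - (1/12)*A3 - (3/20)*C5 := by
    rw [hderiv_eq, hg'deriv.deriv]
  -- rewrite using K = P = 0
  rw [Kf1, ← hG, ← hA3, ← hB4, ← hC5] at hK
  rw [Pf1, ← hG, ← hA3, ← hB4, ← hC5] at hP
  have heq : deriv (deriv (fun l : ℝ => Sf1 a₂ (scal1 l φ))) 1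
      = -(4/81) * A3 - (1/54) * C5 + (5*a₂/72) * B4 := by
    rw [hval]; linarith
  refine ⟨heq, ?_⟩
  -- strict inequality
  set s := Real.sqrt 6 with hsdef
  have hs0 : 0 < s := Real.sqrt_pos.mpr (by norm_num)
  have hs6 : s^2 = 6 := Real.sq_sqrt (by norm_num)
  -- integrability
  have hi3 : Integrable (fun x => |φ x| ^ (3:ℕ)) :=
    integrable_abs_pow φ 3 (by norm_num) (by exact_mod_cast h3)
  have hi4 : Integrable (fun x => |φ x| ^ (4:ℕ)) :=
    integrable_abs_pow φ 4 (by norm_num) (by exact_mod_cast h4)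
  have hi5 : Integrable (fun x => |φ x| ^ (5:ℕ)) :=
    integrable_abs_pow φ 5 (by norm_num) (by exact_mod_cast h5)
  -- B4 > 0
  have hB4pos : 0 < B4 := by
    rw [hB4, lp1]
    have hnn : 0 ≤ fun x => |φ x| ^ (4:ℕ) := fun x => pow_nonneg (abs_nonneg _) 4
    rw [integral_pos_iff_support_of_nonneg hnn hi4]
    have hsupp : Function.support (fun x => |φ x| ^ (4:ℕ)) = {x | φ x ≠ 0} := by
      ext x
      simp [Function.support, abs_eq_zero, pow_eq_zero_iff]
    rw [hsupp]
    have hopen : IsOpen {x : ℝ | φ x ≠ 0} :=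
      isOpen_compl_singleton.preimage hdiff.continuous
    have hne : {x : ℝ | φ x ≠ 0}.Nonempty := by
      by_contra h
      apply hφ0
      funext x
      by_contra hx
      exact h ⟨x, hx⟩
    exact hopen.measure_pos volume hne
  -- pointwise AM-GM
  have hpt : ∀ x : ℝ, 4 * |φ x| ^ (4:ℕ)
      ≤ (4*s/3) * |φ x| ^ (3:ℕ) + (s/2) * |φ x| ^ (5:ℕ) := by
    intro x
    set t := |φ x| with ht
    have ht0 : 0 ≤ t := abs_nonneg _
    have hidt : (4*s/3)*t^3 + (s/2)*t^5 - 4*t^4 = (s/12)*t^3*(s*t-4)^2 := by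
      linear_combination (2*t^4/3 - s*t^5/12) * hs6
    nlinarith [mul_nonneg (mul_nonneg (by positivity : (0:ℝ) ≤ s/12) (pow_nonneg ht0 3))
      (sq_nonneg (s*t-4))]
  -- integrated AM-GM
  have hAM : 4 * B4 ≤ (4*s/3) * A3 + (s/2) * C5 := by
    have h := integral_mono (hi4.const_mul 4)
      ((hi3.const_mul (4*s/3)).add (hi5.const_mul (s/2))) hpt
    simp only [Pi.add_apply] at h
    rw [integral_const_mul _ _, integral_add (hi3.const_mul (4*s/3)) (hi5.const_mul (s/2)),
      integral_const_mul _ _, integral_const_mul _ _] at h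
    simpa [hA3, hB4, hC5, lp1] using h
  -- conclude
  have ha2s : a₂ * (15*s) < 32 := (lt_div_iff₀ (by positivity)).mp ha₂'
  have h1 : 4*B4/(27*s) ≤ (4/81)*A3 + (1/54)*C5 := by
    rw [div_le_iff₀ (by positivity)]
    nlinarith [hAM]
  have h2 : (5*a₂/72)*B4 < 4*B4/(27*s) := by
    rw [lt_div_iff₀ (by positivity)]
    nlinarith [mul_lt_mul_of_pos_right ha2s hB4pos]
  linarith
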